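/- Let A = a₀·I + a·σ, B = b₀·I + b·σ, C = c₀·I + c·σ be qubit observables whose Bloch vectors a, b, c ∈ ℝ³ are linearly independent (so the 3×3 Gram matrix T_{a,b,c} with entries ⟨a,a⟩, ⟨a,b⟩, ⟨a,c⟩, etc., is invertible). Then for every unit vector ψ ∈ ℂ², the vector v = (⟨A⟩_ψ − a₀, ⟨B⟩_ψ − b₀, ⟨C⟩_ψ − c₀) satisfies v T_{a,b,c}^{-1} vᵀ = 1; i.e., the triple of expectation values lies exactly on the boundary surface of the ellipsoid {(r,s,t) : ω_{A,B,C}(r,s,t) ≤ 1}. -/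

import Mathlib

open Matrix MeasureTheory
open scoped ComplexOrder

/-- The Pauli matrix `σ₁`. -/
noncomputable def sigma1 : Matrix (Fin 2) (Fin 2) ℂ := !![0, 1; 1, 0]

/-- The Pauli matrix `σ₂`. -/
noncomputable def sigma2 : Matrix (Fin 2) (Fin 2) ℂ := !![0, -Complex.I; Complex.I, 0]

/-- The Pauli matrix `σ₃`. -/
noncomputable def sigma3 : Matrix (Fin 2) (Fin 2) ℂ := !![1, 0; 0, -1]

/-- The qubit observable `A = a₀·I + a·σ` with Bloch vector `a ∈ ℝ³`. -/
noncomputable def qubitObs (a₀ : ℝ) (a : EuclideanSpace ℝ (Fin 3)) :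
    Matrix (Fin 2) (Fin 2) ℂ :=
  a₀ • (1 : Matrix (Fin 2) (Fin 2) ℂ) + a 0 • sigma1 + a 1 • sigma2 + a 2 • sigma3

/-- Expectation value `⟨A⟩_ψ = ⟨ψ, Aψ⟩` of the observable `A` in the pure state `ψ`. -/
noncomputable def expVal (A : Matrix (Fin 2) (Fin 2) ℂ) (ψ : EuclideanSpace ℂ (Fin 2)) : ℝ :=
  ((star (fun i => ψ i) : Fin 2 → ℂ) ⬝ᵥ A.mulVec (fun i => ψ i)).re

/-- Standard deviation `Δ_ψ A = √(⟨ψ,A²ψ⟩ − ⟨ψ,Aψ⟩²)` in the pure state `ψ`. -/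
noncomputable def devPure (A : Matrix (Fin 2) (Fin 2) ℂ) (ψ : EuclideanSpace ℂ (Fin 2)) : ℝ :=
  Real.sqrt (expVal (A * A) ψ - (expVal A ψ) ^ 2)

/-- The 3×3 Gram matrix `T_{a,b,c}` of the Bloch vectors `a, b, c ∈ ℝ³`. -/
noncomputable def gram3 (a b c : EuclideanSpace ℝ (Fin 3)) : Matrix (Fin 3) (Fin 3) ℝ :=
  !![inner ℝ a a, inner ℝ a b, inner ℝ a c;
     inner ℝ b a, inner ℝ b b, inner ℝ b c;
     inner ℝ c a, inner ℝ c b, inner ℝ c c]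

lemma norm_aux (ψ : EuclideanSpace ℂ (Fin 2)) (hψ : ‖ψ‖ = 1) :
    Complex.normSq (ψ 0) + Complex.normSq (ψ 1) = 1 := by
  have h := congrArg (· ^ 2) hψ
  simp only [EuclideanSpace.norm_eq, Fin.sum_univ_two, one_pow] at h
  rw [Real.sq_sqrt (by positivity)] at h
  simpa [Complex.sq_norm] using h

lemma expVal_aux (r₀ : ℝ) (v : EuclideanSpace ℝ (Fin 3)) (ψ : EuclideanSpace ℂ (Fin 2))
    (hnorm : Complex.normSq (ψ 0) + Complex.normSq (ψ 1) = 1) :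
    expVal (qubitObs r₀ v) ψ - r₀ =
      v 0 * (2 * ((starRingEnd ℂ) (ψ 0) * ψ 1).re)
      + v 1 * (2 * ((starRingEnd ℂ) (ψ 0) * ψ 1).im)
      + v 2 * (Complex.normSq (ψ 0) - Complex.normSq (ψ 1)) := by
  simp only [expVal, qubitObs, sigma1, sigma2, sigma3, dotProduct, mulVec, Fin.sum_univ_two,
    Matrix.add_apply, Matrix.smul_apply, Matrix.one_apply, Pi.star_apply, Complex.normSq_apply,
    Matrix.cons_val', Matrix.cons_val_zero, Matrix.cons_val_one, Matrix.head_cons,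
    Matrix.head_fin_const, Matrix.empty_val', Matrix.cons_val_fin_one,
    smul_eq_mul, Complex.real_smul, RCLike.star_def]
  simp [Complex.add_re, Complex.mul_re, Complex.mul_im, Complex.normSq_apply]
  ring_nf
  have h' : (ψ 0).re^2 + (ψ 0).im^2 + ((ψ 1).re^2 + (ψ 1).im^2) = 1 := by
    simpa [Complex.normSq_apply, pow_two] using hnorm
  linear_combination r₀ * h'

/-- For qubit observables `A = a₀·I + a·σ`, `B = b₀·I + b·σ`, `C = c₀·I + c·σ`
with linearly independent Bloch vectors `a, b, c`, every unit vector `ψ ∈ ℂ²` satisfies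
`v T_{a,b,c}⁻¹ vᵀ = 1` for `v = (⟨A⟩_ψ − a₀, ⟨B⟩_ψ − b₀, ⟨C⟩_ψ − c₀)`; i.e. the triple of
expectation values lies exactly on the boundary of the ellipsoid `{ω_{A,B,C} ≤ 1}`. -/
theorem stmt_11 (a₀ b₀ c₀ : ℝ) (a b c : EuclideanSpace ℝ (Fin 3))
    (habc : LinearIndependent ℝ ![a, b, c]) :
    ∀ ψ : EuclideanSpace ℂ (Fin 2), ‖ψ‖ = 1 →
      ![expVal (qubitObs a₀ a) ψ - a₀, expVal (qubitObs b₀ b) ψ - b₀,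
          expVal (qubitObs c₀ c) ψ - c₀] ⬝ᵥ
        (gram3 a b c)⁻¹.mulVec
          ![expVal (qubitObs a₀ a) ψ - a₀, expVal (qubitObs b₀ b) ψ - b₀,
            expVal (qubitObs c₀ c) ψ - c₀] = 1 := by
  intro ψ hψ
  have hnorm := norm_aux ψ hψ
  set n : Fin 3 → ℝ := ![2 * ((starRingEnd ℂ) (ψ 0) * ψ 1).re,
                         2 * ((starRingEnd ℂ) (ψ 0) * ψ 1).im,
                         Complex.normSq (ψ 0) - Complex.normSq (ψ 1)] with hn
  set M : Matrix (Fin 3) (Fin 3) ℝ := Matrix.of (fun i j => ![a, b, c] i j) with hM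
  -- M is invertible
  have hli : LinearIndependent ℝ (fun i => M i) := by
    have : (fun i => M i) =
        (WithLp.linearEquiv 2 ℝ (Fin 3 → ℝ) : EuclideanSpace ℝ (Fin 3) →ₗ[ℝ] (Fin 3 → ℝ)) ∘
          ![a, b, c] := rfl
    rw [this]
    exact habc.map' _ (LinearEquiv.ker _)
  have hMunit : IsUnit M := linearIndependent_rows_iff_isUnit.mp hli
  have hMdet : IsUnit M.det := (Matrix.isUnit_iff_isUnit_det M).mp hMunit
  -- the vector of expectation values is M *ᵥ n
  have hv : ![expVal (qubitObs a₀ a) ψ - a₀, expVal (qubitObs b₀ b) ψ - b₀,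
      expVal (qubitObs c₀ c) ψ - c₀] = M.mulVec n := by
    funext i
    fin_cases i <;>
      simp [Matrix.mulVec, dotProduct, Fin.sum_univ_three, hM, hn,
        expVal_aux _ _ ψ hnorm]
  -- the Gram matrix is M * Mᵀ
  have hG : gram3 a b c = M * Mᵀ := by
    ext i j
    fin_cases i <;> fin_cases j <;>
      simp [gram3, hM, Matrix.mul_apply, Fin.sum_univ_three, PiLp.inner_apply,
        RCLike.inner_apply, conj_trivial, -inner_self_eq_norm_sq_to_K] <;> ring
  -- n is a unit vector
  have hnn : n ⬝ᵥ n = 1 := by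
    simp only [dotProduct, Fin.sum_univ_three, hn, Matrix.cons_val_zero, Matrix.cons_val_one,
      Matrix.head_cons, Matrix.cons_val_two, Matrix.tail_cons]
    have h' : (ψ 0).re^2 + (ψ 0).im^2 + ((ψ 1).re^2 + (ψ 1).im^2) = 1 := by
      simpa [Complex.normSq_apply, pow_two] using hnorm
    simp only [Complex.mul_re, Complex.mul_im, Complex.normSq_apply, Complex.conj_re,
      Complex.conj_im]
    nlinarith [h']
  rw [hv, hG, Matrix.mul_inv_rev]
  have h1 : (Mᵀ⁻¹ * M⁻¹).mulVec (M.mulVec n) = Mᵀ⁻¹.mulVec n := by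
    rw [Matrix.mulVec_mulVec, Matrix.mul_assoc, Matrix.nonsing_inv_mul M hMdet, Matrix.mul_one]
  rw [h1, Matrix.dotProduct_mulVec, ← Matrix.vecMul_transpose, Matrix.vecMul_vecMul,
    Matrix.mul_nonsing_inv Mᵀ (by simpa using hMdet), Matrix.vecMul_one, hnn]
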